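/- Let G be a finite simple undirected connected graph with at least two vertices and positive vertex weights, with bottleneck decomposition {(B_1,C_1),…,(B_k,C_k)} and α_i = w(C_i)/w(B_i). Define prices p(u) = α_i·w(u) for u ∈ B_i and p(u) = w(u) for u ∈ C_i (these agree when α_k = 1 and B_k = C_k). Then for every BD-mechanism allocation X: (i) Σ_{v∈Γ(u)} x_{uv} = 1 for every u ∈ V (market clearance); (ii) Σ_{v∈Γ(u)} x_{vu}·p(v) ≤ p(u) for every u ∈ V (budget constraint); (iii) for every u ∈ V and every family (y_v)_{v∈Γ(u)} with y_v ≥ 0 and Σ_{v∈Γ(u)} y_v·p(v) ≤ p(u), one has Σ_{v∈Γ(u)} y_v·w(v) ≤ Σ_{v∈Γ(u)} x_{vu}·w(v) (individual optimality); hence (p,X) is a market equilibrium. Moreover U_u(X) = α_i·w(u) for every u ∈ B_i and U_u(X) = w(u)/α_i for every u ∈ C_i. -/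

import Mathlib

open Finset

/-- The total weight of a finite set of vertices. -/
def wsum {V : Type*} (w : V → ℝ) (S : Finset V) : ℝ := ∑ v ∈ S, w v

/-- The neighborhood of `S` inside the induced subgraph on `A`: all vertices of `A` adjacent
to at least one vertex of `S`. -/
def nbhdIn {V : Type*} [DecidableEq V] (G : SimpleGraph V) [DecidableRel G.Adj]
    (A S : Finset V) : Finset V :=
  A.filter fun v => ∃ u ∈ S, G.Adj u v

/-- The α-ratio of `S` computed inside the induced subgraph on `A`. -/
noncomputable def alphaIn {V : Type*} [DecidableEq V] (G : SimpleGraph V)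
    [DecidableRel G.Adj] (w : V → ℝ) (A S : Finset V) : ℝ :=
  wsum w (nbhdIn G A S) / wsum w S

/-- `B` is the maximal bottleneck of the induced subgraph `G[A]`: it is a nonempty subset of
`A` of minimal α-ratio (within `G[A]`) and every strictly larger subset of `A` has strictly
larger α-ratio. -/
def IsMaxBottleneckIn {V : Type*} [DecidableEq V] (G : SimpleGraph V) [DecidableRel G.Adj]
    (w : V → ℝ) (A B : Finset V) : Prop :=
  B.Nonempty ∧ B ⊆ A ∧
    (∀ S : Finset V, S.Nonempty → S ⊆ A → alphaIn G w A B ≤ alphaIn G w A S) ∧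
    ∀ B' : Finset V, B ⊂ B' → B' ⊆ A → alphaIn G w A B < alphaIn G w A B'


/-- `x` is an allocation on `G`: nonnegative, supported on edges, and each vertex
distributes its whole (unit fraction of) resource: `Σ_{v∈Γ(u)} x_{uv} = 1`. -/
def IsAllocation {V : Type*} [Fintype V] [DecidableEq V] (G : SimpleGraph V)
    [DecidableRel G.Adj] (x : V → V → ℝ) : Prop :=
  (∀ u v, 0 ≤ x u v) ∧ (∀ u v, ¬ G.Adj u v → x u v = 0) ∧
    ∀ u : V, ∑ v ∈ G.neighborFinset u, x u v = 1

/-- The utility `U_u(X) = Σ_{v∈Γ(u)} x_{vu}·w(v)` of agent `u` under allocation `x`. -/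
def util {V : Type*} [Fintype V] [DecidableEq V] (G : SimpleGraph V) [DecidableRel G.Adj]
    (w : V → ℝ) (x : V → V → ℝ) (u : V) : ℝ :=
  ∑ v ∈ G.neighborFinset u, x v u * w v

/-- `x` is a BD-mechanism allocation for the bottleneck decomposition `(B i, C i)` with
α-ratios `alpha i`: it is an allocation, exchange happens only along edges between `B i`
and `C i` of the same pair, and `x_{vu}·w(v) = α_i·x_{uv}·w(u)` for every edge `(u,v)`
with `u ∈ B i`, `v ∈ C i`. -/
def IsBDAllocation {V : Type*} [Fintype V] [DecidableEq V] (G : SimpleGraph V)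
    [DecidableRel G.Adj] (w : V → ℝ) (k : ℕ) (B C : Fin k → Finset V)
    (x : V → V → ℝ) : Prop :=
  IsAllocation G x ∧
    (∀ u v : V, x u v ≠ 0 → ∃ i : Fin k, (u ∈ B i ∧ v ∈ C i) ∨ (u ∈ C i ∧ v ∈ B i)) ∧
    ∀ i : Fin k, ∀ u ∈ B i, ∀ v ∈ C i, G.Adj u v →
      x v u * w v = (wsum w (C i) / wsum w (B i)) * (x u v * w u)

/-- with prices `p(u) = α_i·w(u)` for `u ∈ B_i` and `p(u) = w(u)` for
`u ∈ C_i`, every BD-mechanism allocation `X` satisfies market clearance, the budget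
constraints, and individual optimality — so `(p, X)` is a market equilibrium — and
`U_u(X) = α_i·w(u)` for `u ∈ B_i`, `U_u(X) = w(u)/α_i` for `u ∈ C_i`. -/
theorem bd_mechanism_market_equilibrium {V : Type*} [Fintype V] [DecidableEq V]
    (G : SimpleGraph V) [DecidableRel G.Adj] (w : V → ℝ)
    (hw : ∀ v, 0 < w v) (hconn : G.Connected) (hcard : 2 ≤ Fintype.card V)
    (k : ℕ) (B C : Fin k → Finset V) (Vs : Fin (k + 1) → Finset V)
    (hV0 : Vs 0 = univ)
    (hVsucc : ∀ i : Fin k, Vs i.succ = Vs i.castSucc \ (B i ∪ C i))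
    (hVlast : Vs (Fin.last k) = ∅)
    (hB : ∀ i : Fin k, IsMaxBottleneckIn G w (Vs i.castSucc) (B i))
    (hC : ∀ i : Fin k, C i = nbhdIn G (Vs i.castSucc) (B i))
    (p : V → ℝ)
    (hpB : ∀ i : Fin k, ∀ u ∈ B i, p u = (wsum w (C i) / wsum w (B i)) * w u)
    (hpC : ∀ i : Fin k, ∀ u ∈ C i, p u = w u)
    (x : V → V → ℝ) (hx : IsBDAllocation G w k B C x) :
    (∀ u : V, ∑ v ∈ G.neighborFinset u, x u v = 1) ∧
    (∀ u : V, ∑ v ∈ G.neighborFinset u, x v u * p v ≤ p u) ∧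
    (∀ u : V, ∀ y : V → ℝ, (∀ v, 0 ≤ y v) →
      (∑ v ∈ G.neighborFinset u, y v * p v) ≤ p u →
      (∑ v ∈ G.neighborFinset u, y v * w v) ≤ util G w x u) ∧
    (∀ i : Fin k, ∀ u ∈ B i, util G w x u = (wsum w (C i) / wsum w (B i)) * w u) ∧
    (∀ i : Fin k, ∀ u ∈ C i, util G w x u = w u / (wsum w (C i) / wsum w (B i))) := by
  obtain ⟨⟨hxnn, hxedge, hxsum⟩, hsupp, hrel⟩ := hx
  -- basic weight facts
  have hwsum_nonneg : ∀ S : Finset V, 0 ≤ wsum w S := fun S =>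
    Finset.sum_nonneg fun v _ => (hw v).le
  have hwsum_pos : ∀ S : Finset V, S.Nonempty → 0 < wsum w S := fun S hS =>
    Finset.sum_pos (fun v _ => hw v) hS
  have hwsum_mono : ∀ S T : Finset V, S ⊆ T → wsum w S ≤ wsum w T := fun S T h =>
    Finset.sum_le_sum_of_subset_of_nonneg h (fun v _ _ => (hw v).le)
  have hBpos : ∀ i : Fin k, 0 < wsum w (B i) := fun i => hwsum_pos _ (hB i).1
  have hBsub : ∀ i : Fin k, B i ⊆ Vs i.castSucc := fun i => (hB i).2.1
  have hCsub : ∀ i : Fin k, C i ⊆ Vs i.castSucc := fun i => (hC i) ▸ filter_subset _ _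
  -- monotonicity of the chain Vs
  have hVmono : ∀ j i : Fin (k+1), i ≤ j → Vs j ⊆ Vs i := by
    intro j
    induction j using Fin.induction with
    | zero => intro i hi; rw [Fin.le_zero_iff.mp hi]
    | succ j ih =>
      intro i hi
      have hstep : Vs j.succ ⊆ Vs j.castSucc := by
        rw [hVsucc j]; exact sdiff_subset
      rcases eq_or_lt_of_le hi with h | h
      · rw [h]
      · exact hstep.trans (ih i (Fin.le_castSucc_iff.mpr h))
  have hdisjNext : ∀ i : Fin k, ∀ v ∈ Vs i.succ, v ∉ B i ∪ C i := by
    intro i v hv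
    rw [hVsucc i, mem_sdiff] at hv; exact hv.2
  have hmemVs : ∀ i : Fin k, ∀ v, v ∈ B i ∪ C i → v ∈ Vs i.castSucc := by
    intro i v hv
    rcases mem_union.mp hv with h | h
    exacts [hBsub i h, hCsub i h]
  -- pairwise disjointness / uniqueness of the pair containing a vertex
  have huniq : ∀ i j : Fin k, ∀ v, v ∈ B i ∪ C i → v ∈ B j ∪ C j → i = j := by
    have key : ∀ i j : Fin k, i < j → ∀ v, v ∈ B i ∪ C i → v ∉ B j ∪ C j := by
      intro i j hij v hvi hvj
      have hle : i.succ ≤ j.castSucc := by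
        have := Fin.lt_def.mp hij
        simp [Fin.le_def]; omega
      exact hdisjNext i v (hVmono _ _ hle (hmemVs j v hvj)) hvi
    intro i j v hvi hvj
    rcases lt_trichotomy i j with h | h | h
    · exact absurd hvj (key i j h v hvi)
    · exact h
    · exact absurd hvi (key j i h v hvj)
  -- every vertex lies in some pair
  have hcover : ∀ v : V, ∃ i : Fin k, v ∈ B i ∪ C i := by
    intro v
    by_contra h
    push_neg at h
    have hall : ∀ i : Fin (k+1), v ∈ Vs i := by
      intro i
      induction i using Fin.induction with
      | zero => rw [hV0]; exact mem_univ v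
      | succ j ih => rw [hVsucc j, mem_sdiff]; exact ⟨ih, h j⟩
    have hlast := hall (Fin.last k)
    rw [hVlast] at hlast
    exact absurd hlast (notMem_empty v)
  -- no vertex removed after step i is adjacent to B i
  have hkey1 : ∀ i : Fin k, ∀ u ∈ B i, ∀ v ∈ Vs i.succ, ¬ G.Adj u v := by
    intro i u hu v hv hadj
    have hvA : v ∈ Vs i.castSucc := hVmono _ _ (Fin.castSucc_lt_succ : i.castSucc < i.succ).le hv
    have hvC : v ∈ C i := by
      rw [hC i]; exact mem_filter.mpr ⟨hvA, u, hu, hadj⟩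
    exact hdisjNext i v hv (mem_union_right _ hvC)
  -- α_i ≤ 1
  have hαle1 : ∀ i : Fin k, wsum w (C i) / wsum w (B i) ≤ 1 := by
    intro i
    obtain ⟨b, hb⟩ := (hB i).1
    have hA : (Vs i.castSucc).Nonempty := ⟨b, hBsub i hb⟩
    have h1 : alphaIn G w (Vs i.castSucc) (B i) ≤ alphaIn G w (Vs i.castSucc) (Vs i.castSucc) :=
      (hB i).2.2.1 _ hA (subset_refl _)
    have h2 : alphaIn G w (Vs i.castSucc) (Vs i.castSucc) ≤ 1 := by
      rw [alphaIn]
      exact div_le_one_of_le₀ (hwsum_mono _ _ (filter_subset _ _)) (hwsum_nonneg _)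
    have h3 : alphaIn G w (Vs i.castSucc) (B i) = wsum w (C i) / wsum w (B i) := by
      rw [alphaIn, ← hC i]
    linarith [h3 ▸ h1]
  -- α is strictly increasing along consecutive steps
  have hαstep : ∀ i j : Fin k, (j : ℕ) = (i : ℕ) + 1 →
      wsum w (C i) / wsum w (B i) < wsum w (C j) / wsum w (B j) := by
    intro i j hij
    have hij' : i ≠ j := by
      intro h; rw [h] at hij; omega
    have hA'A : Vs j.castSucc = Vs i.succ := by
      congr 1
      exact Fin.ext (by simp [hij])
    have hBj : B j ⊆ Vs i.succ := hA'A ▸ hBsub j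
    have hBjA : B j ⊆ Vs i.castSucc := hBj.trans (hVmono _ _ (Fin.castSucc_lt_succ : i.castSucc < i.succ).le)
    have hdisjB : Disjoint (B i) (B j) := by
      rw [disjoint_left]
      intro v hvi hvj
      exact hij' (huniq i j v (mem_union_left _ hvi) (mem_union_left _ hvj))
    have hdisjC : Disjoint (C i) (C j) := by
      rw [disjoint_left]
      intro v hvi hvj
      exact hij' (huniq i j v (mem_union_right _ hvi) (mem_union_right _ hvj))
    have hsub : B i ∪ B j ⊆ Vs i.castSucc := union_subset (hBsub i) hBjA
    have hssub : B i ⊂ B i ∪ B j := by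
      refine Finset.ssubset_iff_of_subset (subset_union_left) |>.mpr ?_
      obtain ⟨b, hb⟩ := (hB j).1
      exact ⟨b, mem_union_right _ hb, disjoint_right.mp hdisjB hb⟩
    have hmax := (hB i).2.2.2 (B i ∪ B j) hssub hsub
    have h3 : alphaIn G w (Vs i.castSucc) (B i) = wsum w (C i) / wsum w (B i) := by
      rw [alphaIn, ← hC i]
    rw [h3] at hmax
    -- bound the neighborhood of the union
    have hnb : nbhdIn G (Vs i.castSucc) (B i ∪ B j) ⊆ C i ∪ C j := by
      intro v hv
      rw [nbhdIn, mem_filter] at hv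
      obtain ⟨hvA, u, hu, hadj⟩ := hv
      rcases mem_union.mp hu with hu' | hu'
      · refine mem_union_left _ ?_
        rw [hC i]; exact mem_filter.mpr ⟨hvA, u, hu', hadj⟩
      · by_cases hv' : v ∈ Vs i.succ
        · refine mem_union_right _ ?_
          rw [hC j]
          exact mem_filter.mpr ⟨hA'A ▸ hv', u, hu', hadj⟩
        · have hvBC : v ∈ B i ∪ C i := by
            by_contra hvn
            exact hv' (by rw [hVsucc i, mem_sdiff]; exact ⟨hvA, hvn⟩)
          rcases mem_union.mp hvBC with hvB | hvC
          · exact absurd hadj.symm (hkey1 i v hvB u (hBj hu'))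
          · exact mem_union_left _ hvC
    have hBB : wsum w (B i ∪ B j) = wsum w (B i) + wsum w (B j) := by
      rw [wsum, wsum, wsum]; exact sum_union hdisjB
    have hCC : wsum w (C i ∪ C j) = wsum w (C i) + wsum w (C j) := by
      rw [wsum, wsum, wsum]; exact sum_union hdisjC
    have hbi := hBpos i
    have hbj := hBpos j
    have hnn := hwsum_nonneg (C j)
    have hlt : wsum w (C i) / wsum w (B i) <
        (wsum w (C i) + wsum w (C j)) / (wsum w (B i) + wsum w (B j)) := by
      calc wsum w (C i) / wsum w (B i)
          < alphaIn G w (Vs i.castSucc) (B i ∪ B j) := hmax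
        _ = wsum w (nbhdIn G (Vs i.castSucc) (B i ∪ B j)) /
              (wsum w (B i) + wsum w (B j)) := by rw [alphaIn, hBB]
        _ ≤ (wsum w (C i) + wsum w (C j)) / (wsum w (B i) + wsum w (B j)) := by
            have hnum : wsum w (nbhdIn G (Vs i.castSucc) (B i ∪ B j)) ≤
                wsum w (C i) + wsum w (C j) := hCC ▸ hwsum_mono _ _ hnb
            exact (div_le_div_iff_of_pos_right (by positivity)).mpr hnum
    rw [div_lt_div_iff₀ hbi (by positivity)] at hlt
    rw [div_lt_div_iff₀ hbi hbj]
    nlinarith [hlt]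
  -- monotonicity of α
  have hαmono : ∀ i j : Fin k, i ≤ j →
      wsum w (C i) / wsum w (B i) ≤ wsum w (C j) / wsum w (B j) := by
    intro i j hij
    obtain ⟨d, hd⟩ : ∃ d, (j : ℕ) = (i : ℕ) + d := ⟨j - i, by
      have := Fin.le_def.mp hij; omega⟩
    clear hij
    induction d generalizing j with
    | zero =>
      have : i = j := Fin.ext (by omega)
      rw [this]
    | succ d ih =>
      have hdk : (i : ℕ) + d < k := by have := j.isLt; omega
      have h1 := ih ⟨(i : ℕ) + d, hdk⟩ (by simp)
      have h2 := hαstep ⟨(i : ℕ) + d, hdk⟩ j (by simp [hd]; omega)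
      linarith
  -- overlap forces α = 1
  have hoverlap : ∀ i : Fin k, ∀ u, u ∈ B i → u ∈ C i →
      wsum w (C i) / wsum w (B i) = 1 := by
    intro i u h1 h2
    have h := (hpB i u h1).symm.trans (hpC i u h2)
    have : wsum w (C i) / wsum w (B i) * w u = 1 * w u := by rw [one_mul]; exact h
    exact mul_right_cancel₀ (hw u).ne' this
  -- termwise price balance
  have hP : ∀ u v : V, G.Adj u v → x v u * p v = x u v * p u := by
    intro u v hadj
    by_cases h0 : x u v = 0 ∧ x v u = 0
    · rw [h0.1, h0.2]; ring
    · have hpair : ∃ i : Fin k, (u ∈ B i ∧ v ∈ C i) ∨ (u ∈ C i ∧ v ∈ B i) := by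
        rcases not_and_or.mp h0 with h | h
        · exact hsupp u v h
        · obtain ⟨i, hi | hi⟩ := hsupp v u h
          exacts [⟨i, Or.inr ⟨hi.2, hi.1⟩⟩, ⟨i, Or.inl ⟨hi.2, hi.1⟩⟩]
      obtain ⟨i, ⟨hu, hv⟩ | ⟨hu, hv⟩⟩ := hpair
      · rw [hpC i v hv, hpB i u hu, hrel i u hu v hv hadj]; ring
      · have h := hrel i v hv u hu hadj.symm
        rw [hpB i v hv, hpC i u hu, h]; ring
  -- budget holds with equality
  have hbudget : ∀ u, ∑ v ∈ G.neighborFinset u, x v u * p v = p u := by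
    intro u
    have ht : ∀ v ∈ G.neighborFinset u, x v u * p v = x u v * p u := fun v hv =>
      hP u v ((SimpleGraph.mem_neighborFinset G u v).mp hv)
    rw [Finset.sum_congr rfl ht, ← Finset.sum_mul, hxsum u, one_mul]
  -- utility of vertices in B i
  have hutilB : ∀ i : Fin k, ∀ u ∈ B i,
      util G w x u = (wsum w (C i) / wsum w (B i)) * w u := by
    intro i u hu
    have hterm : ∀ v ∈ G.neighborFinset u, x v u * w v = x v u * p v := by
      intro v _
      by_cases h0 : x v u = 0
      · rw [h0]; ring
      · obtain ⟨j, ⟨hvB, huC⟩ | ⟨hvC, huB⟩⟩ := hsupp v u h0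
        · have hji : j = i := huniq j i u (mem_union_right _ huC) (mem_union_left _ hu)
          subst hji
          rw [hpB j v hvB, hoverlap j u hu huC, one_mul]
        · rw [hpC j v hvC]
    rw [util, Finset.sum_congr rfl hterm, hbudget u, hpB i u hu]
  -- utility of vertices in C i
  have hutilC : ∀ i : Fin k, ∀ u ∈ C i,
      util G w x u = w u / (wsum w (C i) / wsum w (B i)) := by
    intro i u hu
    have hCpos : 0 < wsum w (C i) := hwsum_pos _ ⟨u, hu⟩
    have hαpos : 0 < wsum w (C i) / wsum w (B i) := div_pos hCpos (hBpos i)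
    have hterm : ∀ v ∈ G.neighborFinset u,
        x v u * w v = (x v u * p v) / (wsum w (C i) / wsum w (B i)) := by
      intro v _
      by_cases h0 : x v u = 0
      · rw [h0]; ring
      · obtain ⟨j, ⟨hvB, huC⟩ | ⟨hvC, huB⟩⟩ := hsupp v u h0
        · have hji : j = i := huniq j i u (mem_union_right _ huC) (mem_union_right _ hu)
          subst hji
          rw [hpB j v hvB]
          field_simp [(hBpos j).ne', hCpos.ne']
        · have hji : j = i := huniq j i u (mem_union_left _ huB) (mem_union_right _ hu)
          subst hji
          rw [hpC j v hvC, hoverlap j u huB hu, div_one]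
    rw [util, Finset.sum_congr rfl hterm, ← Finset.sum_div, hbudget u, hpC i u hu]
  -- individual optimality
  have hopt : ∀ u : V, ∀ y : V → ℝ, (∀ v, 0 ≤ y v) →
      (∑ v ∈ G.neighborFinset u, y v * p v) ≤ p u →
      (∑ v ∈ G.neighborFinset u, y v * w v) ≤ util G w x u := by
    intro u y hy hbud
    by_cases huB : ∃ i, u ∈ B i
    · obtain ⟨i, hui⟩ := huB
      have hle : ∀ v ∈ G.neighborFinset u, w v ≤ p v := by
        intro v hv
        have hadj : G.Adj u v := (SimpleGraph.mem_neighborFinset G u v).mp hv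
        obtain ⟨j, hj⟩ := hcover v
        by_cases hvC' : v ∈ C j
        · rw [hpC j v hvC']
        · have hvB : v ∈ B j := (mem_union.mp hj).resolve_right hvC'
          rcases lt_trichotomy i j with h | h | h
          · have hle2 : j.castSucc ≥ i.succ := by
              have := Fin.lt_def.mp h
              simp [Fin.le_def]; omega
            exact absurd hadj (hkey1 i u hui v (hVmono _ _ hle2 (hBsub j hvB)))
          · subst h
            have huC : u ∈ C i := by
              rw [hC i]
              exact mem_filter.mpr ⟨hBsub i hui, v, hvB, hadj.symm⟩
            rw [hpB i v hvB, hoverlap i u hui huC, one_mul]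
          · have hle2 : i.castSucc ≥ j.succ := by
              have := Fin.lt_def.mp h
              simp [Fin.le_def]; omega
            exact absurd hadj.symm (hkey1 j v hvB u (hVmono _ _ hle2 (hBsub i hui)))
      calc ∑ v ∈ G.neighborFinset u, y v * w v
          ≤ ∑ v ∈ G.neighborFinset u, y v * p v :=
            Finset.sum_le_sum fun v hv => mul_le_mul_of_nonneg_left (hle v hv) (hy v)
        _ ≤ p u := hbud
        _ = util G w x u := by rw [hutilB i u hui, ← hpB i u hui]
    · push_neg at huB
      obtain ⟨i, hui⟩ := hcover u
      have huC : u ∈ C i := (mem_union.mp hui).resolve_left (huB i)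
      have hCpos : 0 < wsum w (C i) := hwsum_pos _ ⟨u, huC⟩
      have hαpos : 0 < wsum w (C i) / wsum w (B i) := div_pos hCpos (hBpos i)
      have hle : ∀ v ∈ G.neighborFinset u,
          (wsum w (C i) / wsum w (B i)) * w v ≤ p v := by
        intro v hv
        have hadj : G.Adj u v := (SimpleGraph.mem_neighborFinset G u v).mp hv
        obtain ⟨j, hj⟩ := hcover v
        by_cases hvC' : v ∈ C j
        · rw [hpC j v hvC']
          exact mul_le_of_le_one_left (hw v).le (hαle1 i)
        · have hvB : v ∈ B j := (mem_union.mp hj).resolve_right hvC'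
          have hij : i ≤ j := by
            by_contra h
            push_neg at h
            have hle2 : i.castSucc ≥ j.succ := by
              have := Fin.lt_def.mp h
              simp [Fin.le_def]; omega
            exact hkey1 j v hvB u (hVmono _ _ hle2 (hCsub i huC)) hadj.symm
          rw [hpB j v hvB]
          exact mul_le_mul_of_nonneg_right (hαmono i j hij) (hw v).le
      have h1 : ∑ v ∈ G.neighborFinset u, y v * w v ≤
          (∑ v ∈ G.neighborFinset u, y v * p v) / (wsum w (C i) / wsum w (B i)) := by
        rw [le_div_iff₀ hαpos, Finset.sum_mul]
        refine Finset.sum_le_sum fun v hv => ?_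
        nlinarith [hle v hv, hy v]
      have h2 : (∑ v ∈ G.neighborFinset u, y v * p v) / (wsum w (C i) / wsum w (B i)) ≤
          p u / (wsum w (C i) / wsum w (B i)) :=
        (div_le_div_iff_of_pos_right hαpos).mpr hbud
      rw [hutilC i u huC, ← hpC i u huC]
      linarith
  exact ⟨hxsum, fun u => (hbudget u).le, hopt, hutilB, hutilC⟩
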